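/- Let (X, Σ, μ) be a finite measure space and (Y, Γ, ν) a strictly localizable measure space with decomposition ((Y_j, Γ_j, ν))_{j∈J}. Then for any bounded linear operator T : L¹(X, Σ, μ) → L¹(Y, Γ, ν), there exists an at most countable subset J₀ ⊆ J such that the range of T is contained in the closed sublattice ⊕_{j∈J₀} L¹(Y_j, Γ_j, ν) (ℓ¹-direct sum). -/

import Mathlib

open MeasureTheory
open scoped ENNReal NNReal

section Helpers

variable {α : Type*} [MeasurableSpace α] {μ : Measure α}

private lemma indConst_congr {s t : Set α} (h : s = t) (hs : MeasurableSet s)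
    (ht : MeasurableSet t) (hμs : μ s ≠ ⊤) (hμt : μ t ≠ ⊤) (c : ℝ) :
    indicatorConstLp 1 hs hμs c = indicatorConstLp 1 ht hμt c := by
  subst h; rfl

private lemma lp_coeFn_sum {ι : Type*} (P : Finset ι) (F : ι → Lp ℝ 1 μ) :
    ((∑ i ∈ P, F i : Lp ℝ 1 μ) : α → ℝ) =ᵐ[μ] fun x => ∑ i ∈ P, (F i : α → ℝ) x := by
  classical
  induction P using Finset.induction_on with
  | empty => simp; exact Lp.coeFn_zero ℝ 1 μ
  | @insert a s hnot ih =>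
      rw [Finset.sum_insert hnot]
      filter_upwards [Lp.coeFn_add (F a) (∑ i ∈ s, F i), ih] with x h1 h2
      simp only [Pi.add_apply] at h1
      rw [h1, h2, Finset.sum_insert hnot]

private lemma ind_empty_eq_zero :
    indicatorConstLp 1 MeasurableSet.empty (by simp : μ (∅ : Set α) ≠ ⊤) (1 : ℝ)
      = (0 : Lp ℝ 1 μ) := by
  apply Lp.ext
  refine indicatorConstLp_coeFn.trans ?_
  filter_upwards [Lp.coeFn_zero ℝ 1 μ] with x hx
  rw [hx]
  simp

/-- the Lp indicator of a set equals the sum of the Lp indicators of a finite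
measurable partition of it. -/
private lemma ind_eq_sum [IsFiniteMeasure μ] {ι : Type*} (P : Finset ι) (C : ι → Set α)
    (hC : ∀ i, MeasurableSet (C i)) (hd : Set.Pairwise ↑P (Function.onFun Disjoint C))
    {A : Set α} (hA : MeasurableSet A) (hU : (⋃ i ∈ P, C i) = A) :
    indicatorConstLp 1 hA (measure_ne_top μ A) (1 : ℝ)
      = ∑ i ∈ P, indicatorConstLp 1 (hC i) (measure_ne_top μ (C i)) (1 : ℝ) := by
  classical
  apply Lp.ext
  have hall : ∀ᵐ x ∂μ, ∀ i ∈ P, (indicatorConstLp 1 (hC i) (measure_ne_top μ (C i)) (1:ℝ) : α → ℝ) x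
      = (C i).indicator (fun _ => (1:ℝ)) x :=
    (ae_ball_iff P.countable_toSet).2 fun i _ => indicatorConstLp_coeFn
  filter_upwards [indicatorConstLp_coeFn (p := 1) (hs := hA) (hμs := measure_ne_top μ A)
      (c := (1:ℝ)), (lp_coeFn_sum P _).symm, hall] with x h1 h2 h3
  rw [h1, ← h2, Finset.sum_congr rfl h3]
  by_cases hx : x ∈ A
  · rw [← hU] at hx
    obtain ⟨i, hi, hxi⟩ := Set.mem_iUnion₂.1 hx
    rw [hU] at hx
    rw [Set.indicator_of_mem hx, Finset.sum_eq_single_of_mem i hi]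
    · rw [Set.indicator_of_mem hxi]
    · intro b hb hbi
      refine Set.indicator_of_notMem ?_ _
      exact fun hxb => (Set.disjoint_left.1 (hd hb hi hbi) hxb) hxi
  · rw [Set.indicator_of_notMem hx]
    refine (Finset.sum_eq_zero fun i hi => ?_).symm
    refine Set.indicator_of_notMem (fun hxi => hx ?_) _
    rw [← hU]
    exact Set.mem_biUnion hi hxi

end Helpers

theorem range_contained_in_countable_part_of_decomposition
    {X Y : Type*} [MeasurableSpace X] [MeasurableSpace Y]
    (μ : Measure X) [IsFiniteMeasure μ] (ν : Measure Y)
    (J : Type) (Yj : J → Set Y)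
    (hdisj : Pairwise (Function.onFun Disjoint Yj))
    (hcover : (⋃ j, Yj j) = Set.univ)
    (hmeas : ∀ j, MeasurableSet (Yj j) ∧ ν (Yj j) < ⊤)
    (hloc : ∀ A : Set Y, (∀ j, MeasurableSet (A ∩ Yj j)) → MeasurableSet A)
    (hadd : ∀ A : Set Y, MeasurableSet A → ν A = ∑' j, ν (A ∩ Yj j))
    (T : Lp ℝ 1 μ →L[ℝ] Lp ℝ 1 ν) :
    ∃ J₀ : Set J, J₀.Countable ∧
      ∀ f : Lp ℝ 1 μ, ∀ᵐ y ∂ν, y ∉ (⋃ j ∈ J₀, Yj j) → (T f : Y → ℝ) y = 0 := by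
  classical
  -- the basic functional: integral of |T f| over the piece `Yj j`
  set Ψ : J → Lp ℝ 1 ν → ℝ := fun j g => ∫ y in Yj j, |(g : Y → ℝ) y| ∂ν with hΨdef
  set Φ : J → Lp ℝ 1 μ → ℝ := fun j f => Ψ j (T f) with hΦdef
  have hint : ∀ (g : Lp ℝ 1 ν) (s : Set Y),
      Integrable (fun y => |(g : Y → ℝ) y|) (ν.restrict s) :=
    fun g s => ((L1.integrable_coeFn g).restrict).abs
  have hΨnonneg : ∀ j g, 0 ≤ Ψ j g := fun j g => integral_nonneg fun y => abs_nonneg _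
  have hΨnorm : ∀ j (g : Lp ℝ 1 ν), Ψ j g ≤ ‖g‖ := by
    intro j g
    rw [L1.norm_eq_integral_norm]
    simp only [Real.norm_eq_abs]
    exact setIntegral_le_integral (L1.integrable_coeFn g).abs
      (Filter.Eventually.of_forall fun y => abs_nonneg _)
  -- Ψ is additive up to inequality, and congruent along a.e. equality
  have hΨcongr : ∀ j (g g' : Lp ℝ 1 ν), g = g' → Ψ j g = Ψ j g' := fun j g g' h => by rw [h]
  have hΦnonneg : ∀ j f, 0 ≤ Φ j f := fun j f => hΨnonneg j _
  have hΦadd : ∀ j (f g : Lp ℝ 1 μ), Φ j (f + g) ≤ Φ j f + Φ j g := by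
    intro j f g
    have hae : (T (f + g) : Y → ℝ) =ᵐ[ν] fun y => (T f : Y → ℝ) y + (T g : Y → ℝ) y := by
      rw [map_add]; exact Lp.coeFn_add _ _
    have h1 : Φ j (f + g) = ∫ y in Yj j, |(T f : Y → ℝ) y + (T g : Y → ℝ) y| ∂ν := by
      refine integral_congr_ae ?_
      filter_upwards [ae_restrict_of_ae hae] with y h
      rw [h]
    rw [h1]
    calc ∫ y in Yj j, |(T f : Y → ℝ) y + (T g : Y → ℝ) y| ∂ν
        ≤ ∫ y in Yj j, (|(T f : Y → ℝ) y| + |(T g : Y → ℝ) y|) ∂ν := by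
          exact integral_mono
            (((L1.integrable_coeFn (T f)).restrict.add (L1.integrable_coeFn (T g)).restrict).abs)
            ((hint (T f) _).add (hint (T g) _)) fun y => abs_add_le _ _
      _ = Φ j f + Φ j g := integral_add (hint (T f) _) (hint (T g) _)
  have hΦsmul : ∀ j (c : ℝ) (f : Lp ℝ 1 μ), Φ j (c • f) = |c| * Φ j f := by
    intro j c f
    have hae : (T (c • f) : Y → ℝ) =ᵐ[ν] fun y => c * (T f : Y → ℝ) y := by
      rw [_root_.map_smul]
      filter_upwards [Lp.coeFn_smul c (T f)] with y hy
      simpa using hy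
    have h1 : Φ j (c • f) = ∫ y in Yj j, |c| * |(T f : Y → ℝ) y| ∂ν := by
      refine integral_congr_ae ?_
      filter_upwards [ae_restrict_of_ae hae] with y h
      rw [h, abs_mul]
    rw [h1, integral_const_mul]
  have hΦzero : ∀ j, Φ j (0 : Lp ℝ 1 μ) = 0 := by
    intro j
    have := hΦsmul j 0 0
    rw [zero_smul] at this
    simpa using this
  have hΦlip : ∀ j (f g : Lp ℝ 1 μ), |Φ j f - Φ j g| ≤ ‖T‖ * ‖f - g‖ := by
    intro j f g
    have hae : (T (f - g) : Y → ℝ) =ᵐ[ν] fun y => (T f : Y → ℝ) y - (T g : Y → ℝ) y := by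
      rw [map_sub]; exact Lp.coeFn_sub _ _
    have h1 : Φ j f - Φ j g
        = ∫ y in Yj j, (|(T f : Y → ℝ) y| - |(T g : Y → ℝ) y|) ∂ν :=
      (integral_sub (hint (T f) _) (hint (T g) _)).symm
    rw [h1]
    calc |∫ y in Yj j, (|(T f : Y → ℝ) y| - |(T g : Y → ℝ) y|) ∂ν|
        ≤ ∫ y in Yj j, |(|(T f : Y → ℝ) y| - |(T g : Y → ℝ) y|)| ∂ν := by
          simpa [Real.norm_eq_abs] using
            norm_integral_le_integral_norm (μ := ν.restrict (Yj j))
              (f := fun y => |(T f : Y → ℝ) y| - |(T g : Y → ℝ) y|)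
      _ ≤ ∫ y in Yj j, |(T (f - g) : Y → ℝ) y| ∂ν := by
          refine integral_mono_ae ((hint (T f) _).sub (hint (T g) _)).abs
            (hint (T (f - g)) _) ?_
          filter_upwards [ae_restrict_of_ae hae] with y hy
          rw [hy]
          exact abs_abs_sub_abs_le_abs_sub _ _
      _ ≤ ‖T (f - g)‖ := hΨnorm j _
      _ ≤ ‖T‖ * ‖f - g‖ := T.le_opNorm _
  have hΦcont : ∀ j, Continuous (Φ j) := by
    intro j
    refine (LipschitzWith.of_dist_le_mul (K := ‖T‖₊) fun f g => ?_).continuous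
    rw [Real.dist_eq, dist_eq_norm, coe_nnnorm]
    exact hΦlip j f g
  -- notation for the canonical indicator elements
  set ind : ∀ (A : Set X), MeasurableSet A → Lp ℝ 1 μ :=
    fun A hA => indicatorConstLp 1 hA (measure_ne_top μ A) (1 : ℝ) with hinddef
  have hΦind : ∀ j, (∀ (A : Set X) (hA : MeasurableSet A), Φ j (ind A hA) = 0) →
      ∀ f, Φ j f = 0 := by
    intro j h0
    haveI : Fact ((1 : ℝ≥0∞) ≤ 1) := ⟨le_rfl⟩
    refine Lp.induction (E := ℝ) (p := (1 : ℝ≥0∞)) (μ := μ) (by norm_num)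
      (fun f => Φ j f = 0) ?_ ?_ ?_
    · intro c s hs hμs
      rw [Lp.simpleFunc.coe_indicatorConst]
      have hcs : indicatorConstLp 1 hs hμs.ne c = c • ind s hs := by
        apply Lp.ext
        filter_upwards [indicatorConstLp_coeFn (p := (1:ℝ≥0∞)) (hs := hs) (hμs := hμs.ne)
          (c := c), Lp.coeFn_smul c (ind s hs),
          indicatorConstLp_coeFn (p := (1:ℝ≥0∞)) (hs := hs)
            (hμs := measure_ne_top μ s) (c := (1:ℝ))] with x h1 h2 h3
        rw [h1, h2, Pi.smul_apply, hinddef, h3]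
        simp [Set.indicator]
      rw [hcs, hΦsmul, h0 s hs, mul_zero]
    · intro f g hf hg _ hPf hPg
      refine le_antisymm ?_ (hΦnonneg j _)
      calc Φ j (hf.toLp f + hg.toLp g) ≤ Φ j (hf.toLp f) + Φ j (hg.toLp g) := hΦadd j _ _
        _ = 0 := by rw [hPf, hPg, add_zero]
    · have : {f : Lp ℝ 1 μ | Φ j f = 0} = (Φ j) ⁻¹' {0} := rfl
      rw [this]
      exact IsClosed.preimage (hΦcont j) isClosed_singleton
  have hΨsum : ∀ (g : Lp ℝ 1 ν) (t : Finset J), ∑ j ∈ t, Ψ j g ≤ ‖g‖ := by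
    intro g t
    have heq : ∑ j ∈ t, Ψ j g = ∫ y in ⋃ j ∈ t, Yj j, |(g : Y → ℝ) y| ∂ν :=
      (integral_biUnion_finset t (fun j _ => (hmeas j).1)
        (fun a _ b _ hab => hdisj hab) (fun j _ => hint g (Yj j))).symm
    rw [heq, L1.norm_eq_integral_norm]
    simp only [Real.norm_eq_abs]
    exact setIntegral_le_integral (L1.integrable_coeFn g).abs
      (Filter.Eventually.of_forall fun y => abs_nonneg _)
  have hΦsum : ∀ (j : J) (P : Finset (Finset J)) (F : Finset J → Lp ℝ 1 μ),
      Φ j (∑ s ∈ P, F s) ≤ ∑ s ∈ P, Φ j (F s) := by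
    intro j P F
    induction P using Finset.induction_on with
    | empty => simp [hΦzero j]
    | @insert a s hnot ih =>
        rw [Finset.sum_insert hnot, Finset.sum_insert hnot]
        exact (hΦadd j _ _).trans (by gcongr)
  have hnormind : ∀ (A : Set X) (hA : MeasurableSet A), ‖ind A hA‖ = (μ A).toReal := by
    intro A hA
    rw [hinddef, norm_indicatorConstLp one_ne_zero ENNReal.one_ne_top]
    simp
    rfl
  have hfin : ∀ ε : ℝ, 0 < ε →
      {j : J | ∃ (A : Set X) (hA : MeasurableSet A), ε ≤ Φ j (ind A hA)}.Finite := by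
    intro ε hε
    by_contra hinf
    obtain ⟨N, hN⟩ := exists_nat_gt (‖T‖ * (μ Set.univ).toReal / ε)
    obtain ⟨t, htsub, htcard⟩ := Set.Infinite.exists_subset_card_eq hinf N
    have hchoice : ∀ j : J, ∃ (A : Set X) (hA : MeasurableSet A),
        j ∈ t → ε ≤ Φ j (ind A hA) := by
      intro j
      by_cases hj : j ∈ t
      · obtain ⟨A, hA, hle⟩ := htsub hj
        exact ⟨A, hA, fun _ => hle⟩
      · exact ⟨∅, MeasurableSet.empty, fun h => absurd h hj⟩
    choose A hA hAε using hchoice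
    set B : Finset J → Set X := fun s => (⋂ i ∈ s, A i) ∩ (⋂ i ∈ t \ s, (A i)ᶜ) with hBdef
    have hBmeas : ∀ s, MeasurableSet (B s) :=
      fun s => (MeasurableSet.biInter s.countable_toSet fun i _ => hA i).inter
        (MeasurableSet.biInter (t \ s).countable_toSet fun i _ => (hA i).compl)
    have hBsubset : ∀ s, ∀ i ∈ s, B s ⊆ A i := by
      intro s i hi
      exact (Set.inter_subset_left).trans (Set.biInter_subset_of_mem hi)
    have hBsubsetc : ∀ s, ∀ i ∈ t, i ∉ s → B s ⊆ (A i)ᶜ := by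
      intro s i hit hi
      exact (Set.inter_subset_right).trans
        (Set.biInter_subset_of_mem (by exact Finset.mem_sdiff.2 ⟨hit, hi⟩))
    have hBkey : ∀ s s' : Finset J, s' ⊆ t → ∀ i, i ∈ s → i ∈ t → i ∉ s' →
        Disjoint (B s) (B s') := by
      intro s s' hs' i hi hit hi'
      exact Set.disjoint_of_subset (hBsubset s i hi) (hBsubsetc s' i hit hi')
        (disjoint_compl_right (a := A i))
    have hBdisj : Set.Pairwise ↑t.powerset (Function.onFun Disjoint B) := by
      intro s hs s' hs' hne
      rw [Finset.mem_coe, Finset.mem_powerset] at hs hs'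
      by_cases hss : s ⊆ s'
      · obtain ⟨i, hi, hi'⟩ := Finset.not_subset.1 (fun h => hne (Finset.Subset.antisymm hss h))
        exact (hBkey s' s hs i hi (hs' hi) hi').symm
      · obtain ⟨i, hi, hi'⟩ := Finset.not_subset.1 hss
        exact hBkey s s' hs' i hi (hs hi) hi'
    have hBcover : (⋃ s ∈ t.powerset, B s) = Set.univ := by
      ext x
      simp only [Set.mem_iUnion, Set.mem_univ, iff_true]
      refine ⟨t.filter (fun i => x ∈ A i), Finset.mem_powerset.2 (Finset.filter_subset _ _), ?_⟩
      constructor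
      · exact Set.mem_iInter₂.2 fun i hi => (Finset.mem_filter.1 hi).2
      · refine Set.mem_iInter₂.2 fun i hi => ?_
        obtain ⟨hit, his⟩ := Finset.mem_sdiff.1 hi
        exact fun hxa => his (Finset.mem_filter.2 ⟨hit, hxa⟩)
    -- each A j decomposes along the atoms
    have hsplit : ∀ j ∈ t, Φ j (ind (A j) (hA j)) ≤ ∑ s ∈ t.powerset, Φ j (ind (B s) (hBmeas s)) := by
      intro j hjt
      have hpart : ind (A j) (hA j)
          = ∑ s ∈ t.powerset, ind (A j ∩ B s) ((hA j).inter (hBmeas s)) := by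
        simp only [hinddef]
        refine ind_eq_sum t.powerset (fun s => A j ∩ B s)
          (fun s => (hA j).inter (hBmeas s)) ?_ (hA j) ?_
        · intro s hs s' hs' hne
          exact Disjoint.mono Set.inter_subset_right Set.inter_subset_right
            (hBdisj hs hs' hne)
        · rw [← Set.inter_iUnion₂, hBcover, Set.inter_univ]
      rw [hpart]
      refine (hΦsum j _ _).trans (Finset.sum_le_sum fun s hs => ?_)
      rw [Finset.mem_powerset] at hs
      by_cases hjs : j ∈ s
      · exact le_of_eq (congrArg (Φ j)
          (indConst_congr (Set.inter_eq_self_of_subset_right (hBsubset s j hjs)) _ _ _ _ _))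
      · have hem : A j ∩ B s = ∅ := by
          refine Set.eq_empty_of_subset_empty ?_
          refine (Set.inter_subset_inter_right _ (hBsubsetc s j hjt hjs)).trans ?_
          rw [Set.inter_compl_self]
        have : ind (A j ∩ B s) ((hA j).inter (hBmeas s)) = 0 := by
          simp only [hinddef]
          rw [indConst_congr hem ((hA j).inter (hBmeas s)) MeasurableSet.empty
            (measure_ne_top μ _) (by simp) (1 : ℝ)]
          exact ind_empty_eq_zero
        rw [this, hΦzero j]
        exact hΦnonneg j _
    -- the counting estimate
    have hμsum : ∑ s ∈ t.powerset, (μ (B s)).toReal = (μ Set.univ).toReal := by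
      rw [← ENNReal.toReal_sum (fun s _ => measure_ne_top μ _), ← hBcover,
        measure_biUnion_finset hBdisj (fun s _ => hBmeas s)]
    have hchain : (N : ℝ) * ε ≤ ‖T‖ * (μ Set.univ).toReal := by
      calc (N : ℝ) * ε = ∑ _j ∈ t, ε := by
            rw [Finset.sum_const, htcard, nsmul_eq_mul]
        _ ≤ ∑ j ∈ t, Φ j (ind (A j) (hA j)) :=
            Finset.sum_le_sum fun j hj => hAε j hj
        _ ≤ ∑ j ∈ t, ∑ s ∈ t.powerset, Φ j (ind (B s) (hBmeas s)) :=
            Finset.sum_le_sum fun j hj => hsplit j hj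
        _ = ∑ s ∈ t.powerset, ∑ j ∈ t, Ψ j (T (ind (B s) (hBmeas s))) := Finset.sum_comm
        _ ≤ ∑ s ∈ t.powerset, ‖T (ind (B s) (hBmeas s))‖ :=
            Finset.sum_le_sum fun s _ => hΨsum _ t
        _ ≤ ∑ s ∈ t.powerset, ‖T‖ * (μ (B s)).toReal := by
            refine Finset.sum_le_sum fun s _ => ?_
            have := T.le_opNorm (ind (B s) (hBmeas s))
            rwa [hnormind] at this
        _ = ‖T‖ * (μ Set.univ).toReal := by rw [← Finset.mul_sum, hμsum]
    have hlt : ‖T‖ * (μ Set.univ).toReal < (N : ℝ) * ε := (div_lt_iff₀ hε).1 hN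
    exact absurd hchain (not_le.2 hlt)
  set J₀ : Set J := {j | ∃ f : Lp ℝ 1 μ, Φ j f ≠ 0} with hJ₀def
  have hJ₀count : J₀.Countable := by
    have hsub : J₀ ⊆ ⋃ n : ℕ, {j : J | ∃ (A : Set X) (hA : MeasurableSet A),
        1 / (n + 1 : ℝ) ≤ Φ j (ind A hA)} := by
      intro j hj
      obtain ⟨f, hf⟩ := hj
      have hex : ∃ (A : Set X) (hA : MeasurableSet A), Φ j (ind A hA) ≠ 0 := by
        by_contra hcon
        push_neg at hcon
        exact hf (hΦind j hcon f)
      obtain ⟨A, hA, hne⟩ := hex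
      have hpos : 0 < Φ j (ind A hA) := lt_of_le_of_ne (hΦnonneg j _) (Ne.symm hne)
      obtain ⟨n, hn⟩ := exists_nat_one_div_lt hpos
      exact Set.mem_iUnion.2 ⟨n, A, hA, hn.le⟩
    exact (Set.countable_iUnion fun n => (hfin _ (by positivity)).countable).mono hsub
  refine ⟨J₀, hJ₀count, fun f => ?_⟩
  set U : Set Y := ⋃ j ∈ J₀, Yj j with hUdef
  have hU : MeasurableSet U := MeasurableSet.biUnion hJ₀count fun j _ => (hmeas j).1
  have hνsum : ν = Measure.sum fun j => ν.restrict (Yj j) := by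
    ext A hA
    rw [Measure.sum_apply _ hA, hadd A hA]
    exact tsum_congr fun j => (Measure.restrict_apply hA).symm
  have hjz : ∀ j, j ∉ J₀ → (T f : Y → ℝ) =ᵐ[ν.restrict (Yj j)] 0 := by
    intro j hj
    have hzero : Φ j f = 0 := by
      by_contra h
      exact hj ⟨f, h⟩
    simp only [hΦdef, hΨdef] at hzero
    have h2 := (integral_eq_zero_iff_of_nonneg_ae
      (Filter.Eventually.of_forall fun y => abs_nonneg _) (hint (T f) (Yj j))).1 hzero
    filter_upwards [h2] with y hy
    exact abs_eq_zero.1 hy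
  have hlz : ∫⁻ y in Uᶜ, ‖(T f : Y → ℝ) y‖₊ ∂ν = 0 := by
    have hres : ν.restrict Uᶜ
        = Measure.sum fun j => (ν.restrict (Yj j)).restrict Uᶜ := by
      conv_lhs => rw [hνsum]
      exact Measure.restrict_sum _ hU.compl
    rw [hres, lintegral_sum_measure]
    refine ENNReal.tsum_eq_zero.2 fun j => ?_
    by_cases hj : j ∈ J₀
    · have hres0 : (ν.restrict (Yj j)).restrict Uᶜ = 0 := by
        rw [Measure.restrict_restrict hU.compl]
        have hem : Uᶜ ∩ Yj j = ∅ :=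
          Set.eq_empty_of_subset_empty fun y hy => (hy.1 (Set.mem_biUnion hj hy.2)).elim
        rw [hem, Measure.restrict_empty]
      rw [hres0]
      simp
    · refine le_antisymm ?_ (zero_le)
      calc ∫⁻ y, ‖(T f : Y → ℝ) y‖₊ ∂((ν.restrict (Yj j)).restrict Uᶜ)
          ≤ ∫⁻ y, ‖(T f : Y → ℝ) y‖₊ ∂(ν.restrict (Yj j)) :=
            lintegral_mono' Measure.restrict_le_self le_rfl
        _ = 0 := by
            have hcg : (fun y => (‖(T f : Y → ℝ) y‖₊ : ℝ≥0∞)) =ᵐ[ν.restrict (Yj j)]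
                fun _ => 0 := by
              filter_upwards [hjz j hj] with y hy
              rw [Pi.zero_apply] at hy
              simp [hy]
            rw [lintegral_congr_ae hcg, lintegral_zero]
  have hae0 : ∀ᵐ y ∂ν.restrict Uᶜ, (T f : Y → ℝ) y = 0 := by
    have h3 := (lintegral_eq_zero_iff'
      ((Lp.aestronglyMeasurable (T f)).enorm.restrict)).1 hlz
    filter_upwards [h3] with y hy
    simpa using hy
  rw [ae_restrict_iff' hU.compl] at hae0
  filter_upwards [hae0] with y hy hyU
  exact hy hyU
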